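/- arXiv:2107.04753 — 3 statements merged into one kernel-verified Lean document; each statement's English description precedes it below -/
import Mathlib

section
/- Let (V,Y,1,s) be a vertex algebra over k and n ∈ Z≥0. Set M(n,V) = V ⊗ M(n,k), where M(n,k) is the full matrix algebra of order n over k, with state-field map Y^{M(n,V)}(A,z)B = (Y(v_{ij},z))·B (matrix product of the matrix of fields with B) for A = (v_{ij}), B = (u_{ij}) with entries in V, vacuum vector 1·E_n (E_n the identity matrix) and translation operator acting entrywise by s. Then (M(n,V), Y^{M(n,V)}, 1·E_n, s·E_n) is an S-local vertex algebra. -/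
open scoped TensorProduct DirectSum

namespace HopfVA

/-- Generalized binomial coefficient `C(r, j)` for an integer `r` (exact division). -/
def ibinom (r : ℤ) (j : ℕ) : ℤ := (∏ i ∈ Finset.range j, (r - (i : ℤ))) / (j.factorial : ℤ)

/-- `(-1)^q` for an integer exponent `q`. -/
def negOnePow (q : ℤ) : ℤ := if Even q then 1 else -1

section Core

variable {k : Type*} [CommRing k] {V : Type*} [AddCommGroup V] [Module k V]

/-- If `f p q` is the coefficient of `z^p w^q` of a two-variable formal distribution,
then `zwMul n f p q` is the coefficient of `z^p w^q` of `(z-w)^n` times that distribution. -/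
def zwMul (n : ℕ) (f : ℤ → ℤ → V) : ℤ → ℤ → V := fun p q =>
  ∑ i ∈ Finset.range (n + 1),
    ((-1 : ℤ) ^ i * (n.choose i : ℤ)) • f (p - ((n : ℤ) - (i : ℤ))) (q - (i : ℤ))

/-- The data of a state-field correspondence on a pointed vector space:
`Y a n b` is the `n`-th product `a_n b` (so that `Y(a,z)b = ∑ (a_n b) z^{-n-1}`),
`vac` is the vacuum vector and `T` is the translation operator. -/
structure VAData (k V : Type*) [CommRing k] [AddCommGroup V] [Module k V] where
  Y : V →ₗ[k] ℤ → Module.End k V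
  vac : V
  T : Module.End k V

namespace VAData

variable (F : VAData k V)

/-- coefficient of `z^p w^q` in `Y(a,z)Y(b,w)c`. -/
def prodZW (a b c : V) : ℤ → ℤ → V := fun p q => F.Y a (-p - 1) (F.Y b (-q - 1) c)

/-- coefficient of `z^p w^q` in `Y(b,w)Y(a,z)c`. -/
def prodWZ (a b c : V) : ℤ → ℤ → V := fun p q => F.Y b (-q - 1) (F.Y a (-p - 1) c)

/-- coefficient of `z^p w^q` in `i_{z,w} Y(a,z-w)Y(b,-w)c`. -/
noncomputable def compLHS (a b c : V) : ℤ → ℤ → V := fun p q =>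
  negOnePow q •
    ∑ᶠ j : ℕ, ibinom (p + (j : ℤ)) j • F.Y a (-p - 1 - (j : ℤ)) (F.Y b ((j : ℤ) - 1 - q) c)

/-- Truncated (at `j < J`) version of `compLHS`, for `h`-adic statements. -/
def compLHStr (J : ℕ) (a b c : V) : ℤ → ℤ → V := fun p q =>
  negOnePow q •
    ∑ j ∈ Finset.range J, ibinom (p + (j : ℤ)) j • F.Y a (-p - 1 - (j : ℤ)) (F.Y b ((j : ℤ) - 1 - q) c)

/-- coefficient of `z^p w^q` in `Y(Y(a,z)b,-w)c`. -/
def compRHS (a b c : V) : ℤ → ℤ → V := fun p q =>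
  negOnePow q • F.Y (F.Y a (-p - 1) b) (-q - 1) c

/-- The axioms of a state-field correspondence: truncation, the vacuum axioms
`Y(1,z)a = a`, `Y(a,z)1 = a + (Ta)z + ⋯ ∈ V[[z]]`, and translation covariance
`[T, Y(a,z)] = Y(Ta,z) = ∂_z Y(a,z)`. -/
def IsStateField : Prop :=
  (∀ a b : V, ∃ N : ℤ, ∀ n : ℤ, N ≤ n → F.Y a n b = 0) ∧
  (∀ (a : V) (n : ℤ), F.Y F.vac n a = if n = -1 then a else 0) ∧
  (∀ (a : V) (n : ℤ), 0 ≤ n → F.Y a n F.vac = 0) ∧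
  (∀ a : V, F.Y a (-1) F.vac = a) ∧
  (∀ a : V, F.Y a (-2) F.vac = F.T a) ∧
  (∀ (a b : V) (n : ℤ), F.Y (F.T a) n b = F.T (F.Y a n b) - F.Y a n (F.T b)) ∧
  (∀ (a b : V) (n : ℤ), F.Y (F.T a) n b = (-n : ℤ) • F.Y a (n - 1) b)

/-- The associativity relation
`(z-w)^N i_{z,w} Y(a,z-w)Y(b,-w)c = (z-w)^N Y(Y(a,z)b,-w)c`. -/
def IsAssocFA : Prop := ∀ a b c : V, ∃ N : ℕ, ∀ p q : ℤ,
  zwMul N (F.compLHS a b c) p q = zwMul N (F.compRHS a b c) p q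

/-- A field algebra is a state-field correspondence satisfying associativity. -/
def IsFieldAlgebra : Prop := F.IsStateField ∧ F.IsAssocFA

/-- `(z-w)^n [Y(a,z), Y(b,w)] = 0`. -/
def IsLocalPair (a b : V) : Prop :=
  ∃ n : ℕ, ∀ (c : V) (p q : ℤ), zwMul n (F.prodZW a b c) p q = zwMul n (F.prodWZ a b c) p q

/-- A vertex algebra is a field algebra all of whose pairs of fields are local. -/
def IsVertexAlgebra : Prop := F.IsFieldAlgebra ∧ ∀ a b : V, F.IsLocalPair a b

/-- `(z-w)^n Y(a,z)Y(b,w) = (z-w)^n ∑ᵢ Y(bⁱ,w)Y(aⁱ,z)`. -/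
def IsSLocalPair (a b : V) : Prop :=
  ∃ (n m : ℕ) (A B : Fin m → V), ∀ (c : V) (p q : ℤ),
    zwMul n (F.prodZW a b c) p q = ∑ i, zwMul n (F.prodWZ (A i) (B i) c) p q

/-- An `S`-local vertex algebra is a field algebra all of whose pairs of fields
are `S`-local. -/
def IsSLocalVA : Prop := F.IsFieldAlgebra ∧ ∀ a b : V, F.IsSLocalPair a b

end VAData

/-- Data of a module over a field algebra: the module fields `Y^M` and translation `sM`. -/
structure VModData (k V M : Type*) [CommRing k] [AddCommGroup V] [Module k V]
    [AddCommGroup M] [Module k M] where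
  YM : V →ₗ[k] ℤ → Module.End k M
  sM : Module.End k M

namespace VModData

variable {M : Type*} [AddCommGroup M] [Module k M]

/-- coefficient of `z^p w^q` in `Y^M(a,z)Y^M(b,w)x`. -/
def mprodZW (Mo : VModData k V M) (a b : V) (x : M) : ℤ → ℤ → M := fun p q =>
  Mo.YM a (-p - 1) (Mo.YM b (-q - 1) x)

/-- coefficient of `z^p w^q` in `Y^M(b,w)Y^M(a,z)x`. -/
def mprodWZ (Mo : VModData k V M) (a b : V) (x : M) : ℤ → ℤ → M := fun p q =>
  Mo.YM b (-q - 1) (Mo.YM a (-p - 1) x)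

/-- coefficient of `z^p w^q` in `i_{z,w} Y^M(a,z-w)Y^M(b,-w)x`. -/
noncomputable def mcompLHS (Mo : VModData k V M) (a b : V) (x : M) : ℤ → ℤ → M := fun p q =>
  negOnePow q •
    ∑ᶠ j : ℕ, ibinom (p + (j : ℤ)) j • Mo.YM a (-p - 1 - (j : ℤ)) (Mo.YM b ((j : ℤ) - 1 - q) x)

/-- coefficient of `z^p w^q` in `Y^M(Y(a,z)b,-w)x`. -/
def mcompRHS (F : VAData k V) (Mo : VModData k V M) (a b : V) (x : M) : ℤ → ℤ → M := fun p q =>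
  negOnePow q • Mo.YM (F.Y a (-p - 1) b) (-q - 1) x

/-- `M` is a left module over the field algebra `F`: truncation, vacuum, translation
invariance and the associativity axiom. -/
def IsModule (F : VAData k V) (Mo : VModData k V M) : Prop :=
  (∀ (a : V) (x : M), ∃ N : ℤ, ∀ n : ℤ, N ≤ n → Mo.YM a n x = 0) ∧
  (∀ (x : M) (n : ℤ), Mo.YM F.vac n x = if n = -1 then x else 0) ∧
  (∀ (a : V) (x : M) (n : ℤ),
      Mo.sM (Mo.YM a n x) - Mo.YM a n (Mo.sM x) = (-n : ℤ) • Mo.YM a (n - 1) x) ∧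
  (∀ (a b : V) (x : M), ∃ N : ℕ, ∀ p q : ℤ,
      zwMul N (mcompLHS Mo a b x) p q = zwMul N (mcompRHS F Mo a b x) p q)

/-- Locality of the module fields `Y^M(a,z)`, `Y^M(b,w)`. -/
def IsLocalModPair (Mo : VModData k V M) (a b : V) : Prop :=
  ∃ n : ℕ, ∀ (x : M) (p q : ℤ),
    zwMul n (mprodZW Mo a b x) p q = zwMul n (mprodWZ Mo a b x) p q

/-- `S`-locality of the module fields. -/
def IsSLocalModPair (Mo : VModData k V M) (a b : V) : Prop :=
  ∃ (n m : ℕ) (A B : Fin m → V), ∀ (x : M) (p q : ℤ),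
    zwMul n (mprodZW Mo a b x) p q = ∑ i, zwMul n (mprodWZ Mo (A i) (B i) x) p q

end VModData

/-- The `f`-product `a_(f) b = Res_z f(z) Y(a,z) b`, where `f n` is the coefficient
of `z^n` in `f`. -/
noncomputable def fProduct (F : VAData k V) (f : ℤ → k) (a b : V) : V :=
  ∑ᶠ n : ℤ, f n • F.Y a n b

/-- Coefficients of the formal derivative `∂_z f`. -/
def derivCoef (f : ℤ → k) : ℤ → k := fun n => ((n : ℤ) + 1 : ℤ) • f (n + 1)

/-- The subspace `V_(g) V` spanned by all products `a_(g) b` with `g = ∂_z f`. -/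
noncomputable def gSpan (F : VAData k V) (f : ℤ → k) : Submodule k V :=
  Submodule.span k {x : V | ∃ a b : V, x = fProduct F (derivCoef f) a b}

/-- `x ≡ y mod h^M`, where `h = r`. -/
def ModH (r : k) (M : ℕ) (x y : V) : Prop := ∃ v : V, x - y = r ^ M • v

/-- An automorphism of the (state-field data of a) vertex algebra `F`. -/
def IsVAAut (F : VAData k V) (φ : V ≃ₗ[k] V) : Prop :=
  φ F.vac = F.vac ∧ (∀ v : V, φ (F.T v) = F.T (φ v)) ∧
  ∀ (a b : V) (n : ℤ), φ (F.Y a n b) = F.Y (φ a) n (φ b)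

end Core

/-- The coefficients of `f(z) = z⁻¹`. -/
def zinvCoef (k : Type*) [CommRing k] : ℤ → k := fun n => if n = -1 then 1 else 0

/-- The coefficients of `f(z) = c·e^{cz}/(e^{cz}-1)
  = z⁻¹ + c + ∑_{m≥1} B_m c^m z^{m-1}/m!` (Bernoulli numbers `B_m`). -/
noncomputable def berCoef {k : Type*} [Field k] [CharZero k] (c : k) : ℤ → k := fun n =>
  if n < -1 then 0
  else ((bernoulli (n + 1).toNat : ℚ) • (c ^ (n + 1).toNat)) / ((n + 1).toNat.factorial : k)
        + (if n = 0 then c else 0)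

/-- `f(z) = z⁻¹` or `f(z) = c·e^{cz}/(e^{cz}-1)` with `c ≠ 0`. -/
def AdmissibleF {k : Type*} [Field k] [CharZero k] (f : ℤ → k) : Prop :=
  f = zinvCoef k ∨ ∃ c : k, c ≠ 0 ∧ f = berCoef c

section HopfDefs

variable {k : Type*} [CommRing k] {V : Type*} [AddCommGroup V] [Module k V]
variable (H : Type*) [Ring H] [HopfAlgebra k H]

/-- `V` is an `H`-module field algebra: `h·1 = ε(h)1`, `h(Ta) = T(ha)` and
`h(aₙb) = ∑ (h₁a)ₙ(h₂b)` (the last condition quantified over all finite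
representations of `Δ(h)`). -/
def IsHModuleFA [Module H V] [IsScalarTower k H V] (F : VAData k V) : Prop :=
  (∀ h : H, h • F.vac = (Coalgebra.counit (R := k) h) • F.vac) ∧
  (∀ (h : H) (a : V), h • (F.T a : V) = F.T (h • a)) ∧
  (∀ (h : H) (a b : V) (n : ℤ) (m : ℕ) (h1 h2 : Fin m → H),
      Coalgebra.comul (R := k) h = ∑ i, h1 i ⊗ₜ[k] h2 i →
      h • (F.Y a n b : V) = ∑ i, F.Y (h1 i • a) n (h2 i • b))

/-- The smash product structure `V # H` on `V ⊗ H`: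
`Y(a#h,z)(b#g) = ∑ Y(a,z)(h₁b) # h₂g`, vacuum `1#1`, translation `T#1`. -/
def SmashChar [Module H V] [IsScalarTower k H V] (F : VAData k V)
    (FS : VAData k (V ⊗[k] H)) : Prop :=
  (∀ (a b : V) (h g : H) (n : ℤ) (m : ℕ) (h1 h2 : Fin m → H),
      Coalgebra.comul (R := k) h = ∑ i, h1 i ⊗ₜ[k] h2 i →
      FS.Y (a ⊗ₜ[k] h) n (b ⊗ₜ[k] g) = ∑ i, (F.Y a n (h1 i • b) : V) ⊗ₜ[k] (h2 i * g)) ∧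
  (FS.vac = F.vac ⊗ₜ[k] (1 : H)) ∧
  (∀ (a : V) (h : H), FS.T (a ⊗ₜ[k] h) = (F.T a : V) ⊗ₜ[k] h)

end HopfDefs

/-- The fixed point subspace `V^H = {v | h v = ε(h) v for all h}`. -/
def hFixed (k V H : Type*) [CommRing k] [AddCommGroup V] [Module k V]
    [Ring H] [HopfAlgebra k H] [Module H V] [IsScalarTower k H V]
    [SMulCommClass k H V] : Submodule k V where
  carrier := {v : V | ∀ h : H, h • v = (Coalgebra.counit (R := k) h) • v}
  add_mem' := by
    intro a b ha hb h
    rw [smul_add, ha h, hb h, ← smul_add]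
  zero_mem' := by
    intro h
    simp
  smul_mem' := by
    intro c v hv h
    rw [← smul_comm c h v, hv h, smul_smul, smul_smul, mul_comm]

end HopfVA

namespace HopfVA

section MatrixVA

variable {k : Type*} [CommRing k] {V : Type*} [AddCommGroup V] [Module k V]

lemma finsum_eq_range {M : Type*} [AddCommMonoid M] (f : ℕ → M) (J : ℕ)
    (h : ∀ x, J ≤ x → f x = 0) : ∑ᶠ x, f x = ∑ x ∈ Finset.range J, f x := by
  apply finsum_eq_sum_of_support_subset
  intro x hx
  simp only [Function.mem_support] at hx
  simp only [Finset.coe_range, Set.mem_Iio]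
  by_contra hc
  exact hx (h x (le_of_not_gt hc))

lemma zwMul_succ (n : ℕ) (f : ℤ → ℤ → V) (p q : ℤ) :
    zwMul (n + 1) f p q = zwMul n f (p - 1) q - zwMul n f p (q - 1) := by
  have hR1 : zwMul n f (p - 1) q
      = ∑ i ∈ Finset.range (n + 1), ((-1 : ℤ) ^ i * (n.choose i : ℤ)) •
          f (p - (((n : ℤ) + 1) - (i : ℤ))) (q - (i : ℤ)) := by
    refine Finset.sum_congr rfl fun i _ => ?_
    congr 2
    ring
  have hR2 : zwMul n f p (q - 1)
      = ∑ i ∈ Finset.range (n + 1), ((-1 : ℤ) ^ i * (n.choose i : ℤ)) •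
          f (p - ((n : ℤ) - (i : ℤ))) (q - 1 - (i : ℤ)) := rfl
  set G : ℕ → V := fun i => ((-1 : ℤ) ^ i * (n.choose i : ℤ)) •
      f (p - (((n : ℤ) + 1) - (i : ℤ))) (q - (i : ℤ)) with hG
  have hL : zwMul (n + 1) f p q = ∑ i ∈ Finset.range (n + 2),
      ((-1 : ℤ) ^ i * ((n + 1).choose i : ℤ)) •
        f (p - (((n : ℤ) + 1) - (i : ℤ))) (q - (i : ℤ)) := by
    refine Finset.sum_congr rfl fun i _ => ?_
    push_cast
    ring_nf
  rw [hL, Finset.sum_range_succ' _ (n + 1)]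
  have hsplit : ∀ k : ℕ, ((-1 : ℤ) ^ (k + 1) * ((n + 1).choose (k + 1) : ℤ)) •
        f (p - (((n : ℤ) + 1) - ((k : ℤ) + 1))) (q - ((k : ℤ) + 1))
      = (-(((-1 : ℤ) ^ k * (n.choose k : ℤ)))) •
          f (p - ((n : ℤ) - (k : ℤ))) (q - 1 - (k : ℤ)) + G (k + 1) := by
    intro k
    have h1 : p - (((n : ℤ) + 1) - ((k : ℤ) + 1)) = p - ((n : ℤ) - (k : ℤ)) := by ring
    have h2 : q - ((k : ℤ) + 1) = q - 1 - (k : ℤ) := by ring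
    rw [Nat.choose_succ_succ]
    simp only [hG]
    push_cast
    rw [h1, h2, ← add_smul]
    congr 1
    ring
  calc (∑ k ∈ Finset.range (n + 1),
        ((-1 : ℤ) ^ (k + 1) * ((n + 1).choose (k + 1) : ℤ)) •
          f (p - (((n : ℤ) + 1) - ((k : ℤ) + 1))) (q - ((k : ℤ) + 1)))
        + ((-1 : ℤ) ^ 0 * ((n + 1).choose 0 : ℤ)) •
            f (p - (((n : ℤ) + 1) - ((0 : ℕ) : ℤ))) (q - ((0 : ℕ) : ℤ))
      = (∑ k ∈ Finset.range (n + 1),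
          ((-(((-1 : ℤ) ^ k * (n.choose k : ℤ)))) •
            f (p - ((n : ℤ) - (k : ℤ))) (q - 1 - (k : ℤ)) + G (k + 1))) + G 0 := by
        refine congrArg₂ (· + ·) (Finset.sum_congr rfl fun k _ => hsplit k) ?_
        simp [hG]
    _ = ((∑ k ∈ Finset.range (n + 1), G (k + 1)) + G 0)
        - ∑ k ∈ Finset.range (n + 1),
            ((-1 : ℤ) ^ k * (n.choose k : ℤ)) • f (p - ((n : ℤ) - (k : ℤ))) (q - 1 - (k : ℤ)) := by
        rw [Finset.sum_add_distrib]
        simp only [neg_smul]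
        rw [Finset.sum_neg_distrib]
        abel
    _ = zwMul n f (p - 1) q - zwMul n f p (q - 1) := by
        rw [← Finset.sum_range_succ' G (n + 1), Finset.sum_range_succ, hR1, hR2]
        have : G (n + 1) = 0 := by
          simp [hG, Nat.choose_succ_self]
        rw [this, add_zero]

lemma zwMul_mono {N N' : ℕ} (h : N ≤ N') (f g : ℤ → ℤ → V)
    (hfg : ∀ p q : ℤ, zwMul N f p q = zwMul N g p q) :
    ∀ p q : ℤ, zwMul N' f p q = zwMul N' g p q := by
  obtain ⟨d, rfl⟩ := Nat.exists_eq_add_of_le h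
  clear h
  induction d with
  | zero => simpa using hfg
  | succ d ih =>
      intro p q
      rw [show N + (d + 1) = (N + d) + 1 from rfl, zwMul_succ, zwMul_succ, ih, ih]

lemma zwMul_sum {ι : Type*} (s : Finset ι) (F : ι → ℤ → ℤ → V) (n : ℕ) (p q : ℤ) :
    zwMul n (fun p q => ∑ t ∈ s, F t p q) p q = ∑ t ∈ s, zwMul n (F t) p q := by
  unfold zwMul
  simp only [Finset.smul_sum]
  exact Finset.sum_comm

lemma zwMul_congr {f g : ℤ → ℤ → V} (h : ∀ p q, f p q = g p q) (n : ℕ) (p q : ℤ) :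
    zwMul n f p q = zwMul n g p q := by
  unfold zwMul
  exact Finset.sum_congr rfl fun i _ => by rw [h]

lemma Y_zero_left (F : VAData k V) (m : ℤ) (b : V) : F.Y 0 m b = 0 := by
  rw [map_zero]
  rfl

lemma Y_zero_right (F : VAData k V) (a : V) (m : ℤ) : F.Y a m 0 = 0 :=
  map_zero _

variable (F : VAData k V) (n : ℕ)

/-- The entrywise/matrix-product fields on `n×n` matrices over `V`. -/
def matYEnd (A : Matrix (Fin n) (Fin n) V) (m : ℤ) :
    Module.End k (Matrix (Fin n) (Fin n) V) where
  toFun B := Matrix.of fun i j => ∑ l, F.Y (A i l) m (B l j)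
  map_add' B C := by
    ext i j
    simp [Finset.sum_add_distrib]
  map_smul' c B := by
    ext i j
    simp [Finset.smul_sum]

def matY : Matrix (Fin n) (Fin n) V →ₗ[k] ℤ → Module.End k (Matrix (Fin n) (Fin n) V) where
  toFun A := fun m => matYEnd F n A m
  map_add' A B := by
    funext m
    ext C i j
    simp [matYEnd, map_add, Pi.add_apply, LinearMap.add_apply, Finset.sum_add_distrib]
  map_smul' c A := by
    funext m
    ext C i j
    simp [matYEnd, map_smul, Pi.smul_apply, LinearMap.smul_apply, Finset.smul_sum]

/-- Entrywise translation operator. -/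
def matT : Module.End k (Matrix (Fin n) (Fin n) V) where
  toFun A := Matrix.of fun i j => F.T (A i j)
  map_add' A B := by
    ext i j
    simp
  map_smul' c A := by
    ext i j
    simp

/-- The matrix vertex algebra data. -/
def matVA : VAData k (Matrix (Fin n) (Fin n) V) :=
  ⟨matY F n, Matrix.of fun i j => if i = j then F.vac else 0, matT F n⟩

lemma matY_apply (A B : Matrix (Fin n) (Fin n) V) (m : ℤ) (i j : Fin n) :
    (matVA F n).Y A m B i j = ∑ l, F.Y (A i l) m (B l j) := rfl

lemma matY_eq_zero (A B : Matrix (Fin n) (Fin n) V) (m : ℤ)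
    (h : ∀ i l j : Fin n, F.Y (A i l) m (B l j) = 0) : (matVA F n).Y A m B = 0 := by
  ext i j
  rw [matY_apply]
  exact Finset.sum_eq_zero fun l _ => h i l j


lemma matVA_prodZW (A B C : Matrix (Fin n) (Fin n) V) (p q : ℤ) (i j : Fin n) :
    (matVA F n).prodZW A B C p q i j
      = ∑ l, ∑ l', F.prodZW (A i l) (B l l') (C l' j) p q := by
  show (matVA F n).Y A (-p - 1) ((matVA F n).Y B (-q - 1) C) i j = _
  rw [matY_apply]
  refine Finset.sum_congr rfl fun l _ => ?_
  rw [matY_apply, map_sum]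
  rfl

lemma matVA_prodWZ (A B C : Matrix (Fin n) (Fin n) V) (p q : ℤ) (i j : Fin n) :
    (matVA F n).prodWZ A B C p q i j
      = ∑ l, ∑ l', F.prodWZ (A l l') (B i l) (C l' j) p q := by
  show (matVA F n).Y B (-q - 1) ((matVA F n).Y A (-p - 1) C) i j = _
  rw [matY_apply]
  refine Finset.sum_congr rfl fun l _ => ?_
  rw [matY_apply, map_sum]
  rfl

lemma matVA_compRHS (A B C : Matrix (Fin n) (Fin n) V) (p q : ℤ) (i j : Fin n) :
    (matVA F n).compRHS A B C p q i j
      = ∑ l, ∑ l', F.compRHS (A i l) (B l l') (C l' j) p q := by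
  show negOnePow q • ((matVA F n).Y ((matVA F n).Y A (-p - 1) B) (-q - 1) C i j) = _
  rw [matY_apply]
  have : ∀ l' : Fin n, F.Y ((matVA F n).Y A (-p - 1) B i l') (-q - 1) (C l' j)
      = ∑ l, F.Y (F.Y (A i l) (-p - 1) (B l l')) (-q - 1) (C l' j) := by
    intro l'
    rw [matY_apply, map_sum, Finset.sum_apply]
    exact LinearMap.sum_apply _ _ _
  rw [Finset.sum_congr rfl fun l' _ => this l', Finset.smul_sum]
  rw [Finset.sum_comm]
  refine Finset.sum_congr rfl fun l _ => ?_
  rw [Finset.smul_sum]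
  rfl

lemma matVA_compLHS (htrunc : ∀ a b : V, ∃ N : ℤ, ∀ m : ℤ, N ≤ m → F.Y a m b = 0)
    (A B C : Matrix (Fin n) (Fin n) V) (p q : ℤ) (i j : Fin n) :
    (matVA F n).compLHS A B C p q i j
      = ∑ l, ∑ l', F.compLHS (A i l) (B l l') (C l' j) p q := by
  classical
  choose Nb hNb using htrunc
  set J : ℕ := Finset.univ.sup
    (fun t : Fin n × Fin n × Fin n => (Nb (B t.1 t.2.1) (C t.2.1 t.2.2) + 1 + q).toNat) with hJ
  have hJb : ∀ x : ℕ, J ≤ x → ∀ u v w : Fin n,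
      F.Y (B u v) ((x : ℤ) - 1 - q) (C v w) = 0 := by
    intro x hx u v w
    apply hNb
    have h1 : (Nb (B u v) (C v w) + 1 + q).toNat ≤ J :=
      Finset.le_sup (f := fun t : Fin n × Fin n × Fin n =>
        (Nb (B t.1 t.2.1) (C t.2.1 t.2.2) + 1 + q).toNat) (Finset.mem_univ (u, v, w))
    have h2 : Nb (B u v) (C v w) + 1 + q ≤ (x : ℤ) :=
      le_trans (Int.self_le_toNat _) (by exact_mod_cast le_trans h1 hx)
    omega
  have hML : (matVA F n).compLHS A B C p q i j
      = negOnePow q • ∑ x ∈ Finset.range J, ibinom (p + (x : ℤ)) x •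
          ((matVA F n).Y A (-p - 1 - (x : ℤ)) ((matVA F n).Y B ((x : ℤ) - 1 - q) C)) i j := by
    show negOnePow q • ((∑ᶠ x : ℕ, ibinom (p + (x : ℤ)) x •
        (matVA F n).Y A (-p - 1 - (x : ℤ)) ((matVA F n).Y B ((x : ℤ) - 1 - q) C)) i j) = _
    rw [finsum_eq_range _ J ?_]
    · rw [Matrix.sum_apply]
      rfl
    · intro x hx
      have h0 : (matVA F n).Y B ((x : ℤ) - 1 - q) C = 0 :=
        matY_eq_zero F n _ _ _ fun u v w => hJb x hx u v w
      rw [h0, map_zero, smul_zero]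
  rw [hML]
  have hE : ∀ l l' : Fin n, F.compLHS (A i l) (B l l') (C l' j) p q
      = negOnePow q • ∑ x ∈ Finset.range J, ibinom (p + (x : ℤ)) x •
          F.Y (A i l) (-p - 1 - (x : ℤ)) (F.Y (B l l') ((x : ℤ) - 1 - q) (C l' j)) := by
    intro l l'
    show negOnePow q • (∑ᶠ x : ℕ, _) = _
    rw [finsum_eq_range _ J ?_]
    intro x hx
    rw [hJb x hx l l' j, Y_zero_right, smul_zero]
  rw [Finset.sum_congr rfl fun l _ => Finset.sum_congr rfl fun l' _ => hE l l']
  simp only [← Finset.smul_sum]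
  congr 1
  have : ∀ x ∈ Finset.range J, ibinom (p + (x : ℤ)) x •
        ((matVA F n).Y A (-p - 1 - (x : ℤ)) ((matVA F n).Y B ((x : ℤ) - 1 - q) C)) i j
      = ∑ l, ∑ l', ibinom (p + (x : ℤ)) x •
          F.Y (A i l) (-p - 1 - (x : ℤ)) (F.Y (B l l') ((x : ℤ) - 1 - q) (C l' j)) := by
    intro x _
    rw [show ((matVA F n).Y A (-p - 1 - (x : ℤ)) ((matVA F n).Y B ((x : ℤ) - 1 - q) C)) i j
        = ∑ l, ∑ l', F.Y (A i l) (-p - 1 - (x : ℤ)) (F.Y (B l l') ((x : ℤ) - 1 - q) (C l' j))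
      from ?_]
    · rw [Finset.smul_sum]
      exact Finset.sum_congr rfl fun l _ => by rw [Finset.smul_sum]
    · rw [matY_apply]
      exact Finset.sum_congr rfl fun l _ => by rw [matY_apply, map_sum]
  rw [Finset.sum_congr rfl this, Finset.sum_comm]
  refine Finset.sum_congr rfl fun l _ => Finset.sum_comm


lemma zwMul_matrix_apply {n : ℕ} (N : ℕ) (f : ℤ → ℤ → Matrix (Fin n) (Fin n) V)
    (p q : ℤ) (i j : Fin n) :
    zwMul N f p q i j = zwMul N (fun p q => f p q i j) p q := by
  unfold zwMul
  rw [Matrix.sum_apply]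
  rfl

lemma zwMul_zero_fun (N : ℕ) (p q : ℤ) :
    zwMul N (fun _ _ => (0 : V)) p q = 0 := by
  simp [zwMul]

lemma matVA_isStateField (hsf : F.IsStateField) : (matVA F n).IsStateField := by
  obtain ⟨htrunc, hvacY, hYvac0, hYvac1, hYvac2, hT1, hT2⟩ := hsf
  classical
  refine ⟨?_, ?_, ?_, ?_, ?_, ?_, ?_⟩
  · intro A B
    choose Nb hNb using htrunc
    refine ⟨((Finset.univ.sup fun t : Fin n × Fin n × Fin n =>
      (Nb (A t.1 t.2.1) (B t.2.1 t.2.2)).toNat : ℕ) : ℤ), ?_⟩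
    intro m hm
    refine matY_eq_zero F n A B m fun i l j => ?_
    apply hNb
    refine le_trans (Int.self_le_toNat _) (le_trans ?_ hm)
    exact_mod_cast Finset.le_sup (f := fun t : Fin n × Fin n × Fin n =>
      (Nb (A t.1 t.2.1) (B t.2.1 t.2.2)).toNat) (Finset.mem_univ (i, l, j))
  · intro A m
    ext i j
    rw [matY_apply]
    have h1 : ∀ l : Fin n, F.Y ((matVA F n).vac i l) m (A l j)
        = if i = l then F.Y F.vac m (A l j) else 0 := by
      intro l
      show F.Y (if i = l then F.vac else 0) m (A l j) = _
      split_ifs with h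
      · rfl
      · exact Y_zero_left F m _
    rw [Finset.sum_congr rfl fun l _ => h1 l, Finset.sum_ite_eq]
    simp only [Finset.mem_univ, if_true, hvacY]
    by_cases hm : m = -1 <;> simp [hm]
  · intro A m hm
    refine matY_eq_zero F n A _ m fun i l j => ?_
    show F.Y (A i l) m (if l = j then F.vac else 0) = 0
    split_ifs with h
    · exact hYvac0 _ m hm
    · exact Y_zero_right F _ m
  · intro A
    ext i j
    rw [matY_apply]
    have h1 : ∀ l : Fin n, F.Y (A i l) (-1) ((matVA F n).vac l j)
        = if l = j then A i l else 0 := by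
      intro l
      show F.Y (A i l) (-1) (if l = j then F.vac else 0) = _
      split_ifs with h
      · exact hYvac1 _
      · exact Y_zero_right F _ _
    rw [Finset.sum_congr rfl fun l _ => h1 l, Finset.sum_ite_eq']
    simp
  · intro A
    ext i j
    rw [matY_apply]
    have h1 : ∀ l : Fin n, F.Y (A i l) (-2) ((matVA F n).vac l j)
        = if l = j then F.T (A i l) else 0 := by
      intro l
      show F.Y (A i l) (-2) (if l = j then F.vac else 0) = _
      split_ifs with h
      · exact hYvac2 _
      · exact Y_zero_right F _ _
    rw [Finset.sum_congr rfl fun l _ => h1 l, Finset.sum_ite_eq']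
    simp
    rfl
  · intro A B m
    ext i j
    show ∑ l, F.Y (F.T (A i l)) m (B l j)
      = F.T ((matVA F n).Y A m B i j) - (matVA F n).Y A m ((matVA F n).T B) i j
    rw [matY_apply, matY_apply, map_sum, ← Finset.sum_sub_distrib]
    exact Finset.sum_congr rfl fun l _ => hT1 _ _ m
  · intro A B m
    ext i j
    show ∑ l, F.Y (F.T (A i l)) m (B l j) = (-m : ℤ) • ((matVA F n).Y A (m - 1) B i j)
    rw [matY_apply, Finset.smul_sum]
    exact Finset.sum_congr rfl fun l _ => hT2 _ _ m

lemma matVA_isAssoc (htrunc : ∀ a b : V, ∃ N : ℤ, ∀ m : ℤ, N ≤ m → F.Y a m b = 0)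
    (hassoc : F.IsAssocFA) : (matVA F n).IsAssocFA := by
  classical
  intro A B C
  choose NN hNN using hassoc
  refine ⟨Finset.univ.sup (fun t : Fin n × Fin n × Fin n × Fin n =>
    NN (A t.1 t.2.1) (B t.2.1 t.2.2.1) (C t.2.2.1 t.2.2.2)), fun p q => ?_⟩
  set N := Finset.univ.sup (fun t : Fin n × Fin n × Fin n × Fin n =>
    NN (A t.1 t.2.1) (B t.2.1 t.2.2.1) (C t.2.2.1 t.2.2.2)) with hN
  ext i j
  rw [zwMul_matrix_apply, zwMul_matrix_apply]
  calc zwMul N (fun p q => (matVA F n).compLHS A B C p q i j) p q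
      = zwMul N (fun p q => ∑ l, ∑ l', F.compLHS (A i l) (B l l') (C l' j) p q) p q :=
        zwMul_congr (fun p q => matVA_compLHS F n htrunc A B C p q i j) N p q
    _ = ∑ l, ∑ l', zwMul N (F.compLHS (A i l) (B l l') (C l' j)) p q := by
        rw [zwMul_sum]
        exact Finset.sum_congr rfl fun l _ => zwMul_sum _ _ N p q
    _ = ∑ l, ∑ l', zwMul N (F.compRHS (A i l) (B l l') (C l' j)) p q := by
        refine Finset.sum_congr rfl fun l _ => Finset.sum_congr rfl fun l' _ => ?_
        refine zwMul_mono ?_ _ _ (hNN (A i l) (B l l') (C l' j)) p q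
        exact Finset.le_sup (f := fun t : Fin n × Fin n × Fin n × Fin n =>
          NN (A t.1 t.2.1) (B t.2.1 t.2.2.1) (C t.2.2.1 t.2.2.2))
          (Finset.mem_univ (i, l, l', j))
    _ = zwMul N (fun p q => ∑ l, ∑ l', F.compRHS (A i l) (B l l') (C l' j) p q) p q := by
        rw [zwMul_sum]
        exact (Finset.sum_congr rfl fun l _ => (zwMul_sum _ _ N p q).symm)
    _ = zwMul N (fun p q => (matVA F n).compRHS A B C p q i j) p q :=
        zwMul_congr (fun p q => (matVA_compRHS F n A B C p q i j).symm) N p q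

/-- auxiliary matrices for `S`-locality -/
def locAmat (A : Matrix (Fin n) (Fin n) V) (t : Fin n × Fin n × Fin n) :
    Matrix (Fin n) (Fin n) V :=
  Matrix.of fun u v => if u = t.2.1 then if v = t.2.2 then A t.1 t.2.1 else 0 else 0

def locBmat (B : Matrix (Fin n) (Fin n) V) (t : Fin n × Fin n × Fin n) :
    Matrix (Fin n) (Fin n) V :=
  Matrix.of fun u v => if v = t.2.1 then if u = t.1 then B t.2.1 t.2.2 else 0 else 0

lemma matVA_isSLocal (hloc : ∀ a b : V, F.IsLocalPair a b) (A B : Matrix (Fin n) (Fin n) V) :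
    (matVA F n).IsSLocalPair A B := by
  classical
  choose nn hnn using hloc
  set n₀ : ℕ := Finset.univ.sup
    (fun t : Fin n × Fin n × Fin n => nn (A t.1 t.2.1) (B t.2.1 t.2.2)) with hn₀
  set e := (Fintype.equivFin (Fin n × Fin n × Fin n)) with he
  refine ⟨n₀, Fintype.card (Fin n × Fin n × Fin n),
    (fun s => locAmat n A (e.symm s)), (fun s => locBmat n B (e.symm s)), ?_⟩
  intro C p q
  ext i j
  have hentry : ∀ t : Fin n × Fin n × Fin n, ∀ p q : ℤ,
      (matVA F n).prodWZ (locAmat n A t) (locBmat n B t) C p q i j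
        = if i = t.1 then F.prodWZ (A t.1 t.2.1) (B t.2.1 t.2.2) (C t.2.2 j) p q else 0 := by
    intro t p q
    rw [matVA_prodWZ]
    rw [Finset.sum_eq_single t.2.1 ?h₀ (by simp)]
    case h₀ =>
      intro l _ hl
      refine Finset.sum_eq_zero fun l' _ => ?_
      show F.Y (locBmat n B t i l) (-q - 1) _ = 0
      have : locBmat n B t i l = 0 := by
        show (if l = t.2.1 then _ else (0:V)) = 0
        rw [if_neg hl]
      rw [this, Y_zero_left]
    rw [Finset.sum_eq_single t.2.2 ?h₁ (by simp)]
    case h₁ =>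
      intro l' _ hl'
      show F.Y _ (-q - 1) (F.Y (locAmat n A t t.2.1 l') (-p - 1) (C l' j)) = 0
      have : locAmat n A t t.2.1 l' = 0 := by
        show (if (t.2.1 : Fin n) = t.2.1 then if l' = t.2.2 then _ else (0:V) else 0) = 0
        rw [if_pos rfl, if_neg hl']
      rw [this, Y_zero_left, Y_zero_right]
    show F.Y (locBmat n B t i t.2.1) (-q - 1)
        (F.Y (locAmat n A t t.2.1 t.2.2) (-p - 1) (C t.2.2 j)) = _
    have hA : locAmat n A t t.2.1 t.2.2 = A t.1 t.2.1 := by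
      show (if (t.2.1 : Fin n) = t.2.1 then if (t.2.2 : Fin n) = t.2.2 then _ else (0:V) else 0) = _
      rw [if_pos rfl, if_pos rfl]
    have hB : locBmat n B t i t.2.1 = if i = t.1 then B t.2.1 t.2.2 else 0 := by
      show (if (t.2.1 : Fin n) = t.2.1 then if i = t.1 then _ else (0:V) else 0) = _
      rw [if_pos rfl]
    rw [hA, hB]
    split_ifs with h
    · rfl
    · rw [Y_zero_left]
  calc zwMul n₀ ((matVA F n).prodZW A B C) p q i j
      = zwMul n₀ (fun p q => ∑ l, ∑ l', F.prodZW (A i l) (B l l') (C l' j) p q) p q := by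
        rw [zwMul_matrix_apply]
        exact zwMul_congr (fun p q => matVA_prodZW F n A B C p q i j) n₀ p q
    _ = ∑ l, ∑ l', zwMul n₀ (F.prodZW (A i l) (B l l') (C l' j)) p q := by
        rw [zwMul_sum]
        exact Finset.sum_congr rfl fun l _ => zwMul_sum _ _ n₀ p q
    _ = ∑ l, ∑ l', zwMul n₀ (F.prodWZ (A i l) (B l l') (C l' j)) p q := by
        refine Finset.sum_congr rfl fun l _ => Finset.sum_congr rfl fun l' _ => ?_
        refine zwMul_mono ?_ _ _ (fun p q => hnn (A i l) (B l l') (C l' j) p q) p q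
        exact Finset.le_sup (f := fun t : Fin n × Fin n × Fin n =>
          nn (A t.1 t.2.1) (B t.2.1 t.2.2)) (Finset.mem_univ (i, l, l'))
    _ = ∑ t : Fin n × Fin n × Fin n, if i = t.1 then
          zwMul n₀ (F.prodWZ (A t.1 t.2.1) (B t.2.1 t.2.2) (C t.2.2 j)) p q else 0 := by
        symm
        rw [Fintype.sum_prod_type]
        have hpull : ∀ x : Fin n, (∑ y : Fin n × Fin n, if i = x then
            zwMul n₀ (F.prodWZ (A x y.1) (B y.1 y.2) (C y.2 j)) p q else 0)
            = if i = x then ∑ y : Fin n × Fin n,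
                zwMul n₀ (F.prodWZ (A x y.1) (B y.1 y.2) (C y.2 j)) p q else 0 := by
          intro x
          split_ifs <;> simp
        rw [Finset.sum_congr rfl fun x _ => hpull x, Finset.sum_ite_eq]
        simp only [Finset.mem_univ, if_true]
        rw [Fintype.sum_prod_type]
    _ = ∑ s : Fin (Fintype.card (Fin n × Fin n × Fin n)), if i = (e.symm s).1 then
          zwMul n₀ (F.prodWZ (A (e.symm s).1 (e.symm s).2.1) (B (e.symm s).2.1 (e.symm s).2.2)
            (C (e.symm s).2.2 j)) p q else 0 :=
        (Equiv.sum_comp e.symm (fun t : Fin n × Fin n × Fin n => if i = t.1 then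
          zwMul n₀ (F.prodWZ (A t.1 t.2.1) (B t.2.1 t.2.2) (C t.2.2 j)) p q else 0)).symm
    _ = (∑ s : Fin (Fintype.card (Fin n × Fin n × Fin n)),
          zwMul n₀ ((matVA F n).prodWZ (locAmat n A (e.symm s)) (locBmat n B (e.symm s)) C)
            p q) i j := by
        rw [Matrix.sum_apply]
        refine Finset.sum_congr rfl fun s _ => ?_
        rw [zwMul_matrix_apply,
          zwMul_congr (fun p q => hentry (e.symm s) p q) n₀ p q]
        by_cases h : i = (e.symm s).1
        · rw [if_pos h]
          exact (zwMul_congr (fun p q => if_pos h) n₀ p q).symm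
        · rw [if_neg h]
          exact ((zwMul_congr (g := fun _ _ => (0:V)) (fun p q => if_neg h) n₀ p q).trans
            (zwMul_zero_fun n₀ p q)).symm

end MatrixVA

/-- If `(V,Y,1,s)` is a vertex algebra and `n ∈ ℤ≥0`, then
`M(n,V) = V ⊗ M(n,k)`, i.e. `n×n` matrices over `V`, with
`Y^{M(n,V)}(A,z)B = (Y(v_{ij},z))·B` (matrix product), vacuum `1·Eₙ` and entrywise
translation operator, is an `S`-local vertex algebra. -/
theorem statement1 {k : Type*} [Field k] [CharZero k]
    {V : Type*} [AddCommGroup V] [Module k V]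
    (F : VAData k V) (hF : F.IsVertexAlgebra) (n : ℕ) :
    ∃ FM : VAData k (Matrix (Fin n) (Fin n) V),
      (∀ (A B : Matrix (Fin n) (Fin n) V) (m : ℤ) (i j : Fin n),
          FM.Y A m B i j = ∑ l : Fin n, F.Y (A i l) m (B l j)) ∧
      (∀ i j : Fin n, FM.vac i j = if i = j then F.vac else 0) ∧
      (∀ (A : Matrix (Fin n) (Fin n) V) (i j : Fin n), FM.T A i j = F.T (A i j)) ∧
      FM.IsSLocalVA := by
  obtain ⟨⟨hsf, hassoc⟩, hloc⟩ := hF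
  exact ⟨matVA F n, fun A B m i j => rfl, fun i j => rfl, fun A i j => rfl,
    ⟨⟨matVA_isStateField F n hsf, matVA_isAssoc F n hsf.1 hassoc⟩,
     fun A B => matVA_isSLocal F n hloc A B⟩⟩

end HopfVA
end

section
/- Let (M,Y^M,s_M) be a left module over a field algebra (V,Y,1,s). If M is finite-dimensional over k, then Y^M(a,z)m ∈ M[[z]] for every a ∈ V and m ∈ M; that is, a^M_n m = 0 for all n ≥ 0. -/
open scoped TensorProduct DirectSum

namespace HopfVA

/-- If `(M,Y^M,s_M)` is a left module over a field algebra `(V,Y,1,s)`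
and `M` is finite-dimensional over `k`, then `Y^M(a,z)m ∈ M[[z]]` for all `a ∈ V`,
`m ∈ M`: all modes `a^M_n m` with `n ≥ 0` vanish. -/
theorem statement2 {k : Type*} [Field k] [CharZero k]
    {V : Type*} [AddCommGroup V] [Module k V]
    {M : Type*} [AddCommGroup M] [Module k M] [FiniteDimensional k M]
    (F : VAData k V) (hF : F.IsFieldAlgebra)
    (Mo : VModData k V M) (hMo : VModData.IsModule F Mo) :
    ∀ (a : V) (m : M) (n : ℤ), 0 ≤ n → Mo.YM a n m = 0 := by
  obtain ⟨htrunc, -, htrans, -⟩ := hMo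
  intro a m n hn
  -- Step 1: a uniform truncation bound, using finite-dimensionality of M.
  obtain ⟨d, s, hs⟩ := Module.Finite.exists_fin (R := k) (M := M)
  choose Nf hNf using fun i : Fin d => htrunc a (s i)
  set N₀ : ℤ := ((Finset.univ.sup fun i => (Nf i).toNat : ℕ) : ℤ) with hN₀
  have huniform : ∀ n : ℤ, N₀ ≤ n → ∀ x : M, Mo.YM a n x = 0 := by
    intro n hn x
    have hx : x ∈ Submodule.span k (Set.range s) := by rw [hs]; trivial
    induction hx using Submodule.span_induction with
    | mem y hy =>
      obtain ⟨i, rfl⟩ := hy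
      apply hNf i
      have h1 : Nf i ≤ ((Nf i).toNat : ℤ) := Int.self_le_toNat _
      have h2 : (Nf i).toNat ≤ Finset.univ.sup fun i => (Nf i).toNat :=
        Finset.le_sup (f := fun i => (Nf i).toNat) (Finset.mem_univ i)
      omega
    | zero => simp
    | add y z _ _ hy hz => rw [map_add, hy, hz, add_zero]
    | smul c y _ hy => rw [map_smul, hy, smul_zero]
  -- Step 2: downward induction using translation covariance.
  have key : ∀ d : ℕ, ∀ n : ℤ, 0 ≤ n → N₀ ≤ n + d → ∀ x : M, Mo.YM a n x = 0 := by
    intro d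
    induction d with
    | zero => intro n hn hle x; exact huniform n (by simpa using hle) x
    | succ d ih =>
      intro n hn hle x
      have h1 : ∀ y : M, Mo.YM a (n + 1) y = 0 := by
        intro y
        refine ih (n + 1) (by omega) ?_ y
        push_cast at hle ⊢
        omega
      have ht := htrans a x (n + 1)
      rw [h1 x, h1 (Mo.sM x), map_zero, sub_zero] at ht
      have ht' : (0 : M) = (((-(n + 1) : ℤ) : k)) • Mo.YM a n x := by
        rw [Int.cast_smul_eq_zsmul]
        simpa using ht
      have hne : (((-(n + 1) : ℤ) : k)) ≠ 0 := by
        simp only [ne_eq, Int.cast_eq_zero]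
        omega
      have := ht'.symm
      rcases smul_eq_zero.mp this with h | h
      · exact absurd h hne
      · exact h
  refine key (N₀ - n).toNat n hn ?_ m
  omega

end HopfVA
end

section
/- Let H be a Hopf algebra over k, (V,Y,1,s) an H-module field algebra, and suppose H admits a left integral t (i.e. ht = ε(h)t for all h ∈ H) with ε(t) ≠ 0; normalize so that ε(t) = 1. Equip V⊗H with the field algebra structure Y_H(a⊗h,z)(b⊗g) = Σ_{n∈Z} a_n(h_1 b) ⊗ h_2 g · z^{−n−1}, vacuum 1⊗1, s(a⊗h) = sa⊗h. Then the map φ: V^H → {(1⊗t)_{−1}(v_{−1}(1⊗t)) : v ∈ V⊗H} given by φ(a) = a⊗t is a bijection satisfying φ(a_n b) = φ(a)_n φ(b) for all a,b ∈ V^H and n ∈ Z; i.e. V^H is isomorphic as a field algebra to {(1⊗t)_{−1}(v_{−1}(1⊗t)) : v ∈ V⊗H}. -/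
open scoped TensorProduct DirectSum

namespace HopfVA

/-- Every element of a tensor product is a finite (Fin-indexed) sum of pure tensors. -/
lemma exists_fin_repr {k A B : Type*} [CommRing k] [AddCommGroup A] [Module k A]
    [AddCommGroup B] [Module k B] (x : A ⊗[k] B) :
    ∃ (m : ℕ) (f : Fin m → A) (g : Fin m → B), x = ∑ i, f i ⊗ₜ[k] g i := by
  induction x using TensorProduct.induction_on with
  | zero => exact ⟨0, ![], ![], by simp⟩
  | tmul a b => exact ⟨1, ![a], ![b], by simp⟩
  | add x y hx hy =>
    obtain ⟨m, f1, g1, rfl⟩ := hx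
    obtain ⟨n, f2, g2, rfl⟩ := hy
    refine ⟨m + n, Fin.append f1 f2, Fin.append g1 g2, ?_⟩
    rw [Fin.sum_univ_add]
    simp [Fin.append_left, Fin.append_right]

/-- From a finite representation of the comultiplication, recover the element
via the counit (right counit axiom). -/
lemma repr_counit_smul_sum {k H : Type*} [CommRing k] [Ring H] [HopfAlgebra k H]
    {g : H} {m : ℕ} {g1 g2 : Fin m → H}
    (h : Coalgebra.comul (R := k) g = ∑ i, g1 i ⊗ₜ[k] g2 i) :
    ∑ i, (Coalgebra.counit (R := k) (g2 i)) • g1 i = g := by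
  have h1 := Coalgebra.lTensor_counit_comul (R := k) g
  rw [h, map_sum] at h1
  simp only [LinearMap.lTensor_tmul] at h1
  have h2 := congrArg (TensorProduct.rid k H) h1
  rw [map_sum] at h2
  simpa [TensorProduct.rid_tmul] using h2

/-- Applying the counit to the previous identity. -/
lemma repr_counit_mul_sum {k H : Type*} [CommRing k] [Ring H] [HopfAlgebra k H]
    {g : H} {m : ℕ} {g1 g2 : Fin m → H}
    (h : Coalgebra.comul (R := k) g = ∑ i, g1 i ⊗ₜ[k] g2 i) :
    ∑ i, (Coalgebra.counit (R := k) (g1 i)) * (Coalgebra.counit (R := k) (g2 i))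
      = Coalgebra.counit (R := k) g := by
  have h1 := congrArg (Coalgebra.counit (R := k)) (repr_counit_smul_sum h)
  rw [map_sum] at h1
  simpa [smul_eq_mul, mul_comm] using h1

/-- Let `V` be an `H`-module field algebra and suppose `H` admits a
left integral `t` with `ε(t) ≠ 0`.  Then there is a left integral `t` with `ε(t) = 1`
such that the map `φ(a) = a ⊗ t` is a bijection from `V^H` onto
`{(1⊗t)₋₁(v₋₁(1⊗t)) : v ∈ V ⊗ H}` intertwining all `n`-th products; i.e. `V^H` is
isomorphic to that subset as a field algebra. -/
theorem statement4 {k : Type*} [Field k] [CharZero k]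
    {V : Type*} [AddCommGroup V] [Module k V]
    {H : Type*} [Ring H] [HopfAlgebra k H]
    [Module H V] [IsScalarTower k H V] [SMulCommClass k H V]
    (F : VAData k V) (hF : F.IsFieldAlgebra) (hHF : IsHModuleFA H F)
    (FS : VAData k (V ⊗[k] H)) (hFS : SmashChar H F FS)
    (t : H) (ht : ∀ h : H, h * t = (Coalgebra.counit (R := k) h) • t)
    (ht0 : Coalgebra.counit (R := k) t ≠ 0) :
    ∃ t' : H, (∀ h : H, h * t' = (Coalgebra.counit (R := k) h) • t') ∧
      Coalgebra.counit (R := k) t' = 1 ∧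
      (Set.InjOn (fun a : V => a ⊗ₜ[k] t') (hFixed k V H)) ∧
      ((fun a : V => a ⊗ₜ[k] t') '' (hFixed k V H) =
        {x : V ⊗[k] H | ∃ v : V ⊗[k] H,
          x = FS.Y (F.vac ⊗ₜ[k] t') (-1) (FS.Y v (-1) (F.vac ⊗ₜ[k] t'))}) ∧
      (∀ a ∈ hFixed k V H, ∀ b ∈ hFixed k V H, ∀ n : ℤ,
        FS.Y (a ⊗ₜ[k] t') n (b ⊗ₜ[k] t') = (F.Y a n b : V) ⊗ₜ[k] t') := by
  classical
  set ε : H →ₗ[k] k := Coalgebra.counit (R := k) with hε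
  set t' : H := (ε t)⁻¹ • t with ht'def
  have ht' : ∀ h : H, h * t' = ε h • t' := by
    intro h
    rw [ht'def, Algebra.mul_smul_comm, ht h, smul_comm]
  have hεt' : ε t' = 1 := by
    rw [ht'def, map_smul, smul_eq_mul, inv_mul_cancel₀ ht0]
  -- contraction map C(a ⊗ g) = ε(g) • a
  set C : V ⊗[k] H →ₗ[k] V :=
    (TensorProduct.rid k V).toLinearMap ∘ₗ LinearMap.lTensor V ε with hC
  have hCtmul : ∀ (a : V) (g : H), C (a ⊗ₜ[k] g) = ε g • a := by
    intro a g
    simp [hC, TensorProduct.rid_tmul]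
  -- fixed representation of comul t'
  obtain ⟨m, h1, h2, hrep⟩ := exists_fin_repr (Coalgebra.comul (R := k) t')
  have hsum : ∑ i, ε (h2 i) • h1 i = t' := repr_counit_smul_sum hrep
  -- main product computation
  have L1 : ∀ (a b : V) (n : ℤ),
      FS.Y (a ⊗ₜ[k] t') n (b ⊗ₜ[k] t') = (F.Y a n (t' • b) : V) ⊗ₜ[k] t' := by
    intro a b n
    rw [hFS.1 a b t' t' n m h1 h2 hrep]
    have step : ∀ i : Fin m, (F.Y a n (h1 i • b) : V) ⊗ₜ[k] (h2 i * t')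
        = (ε (h2 i) • (F.Y a n (h1 i • b) : V)) ⊗ₜ[k] t' := by
      intro i
      rw [ht' (h2 i), TensorProduct.tmul_smul, TensorProduct.smul_tmul']
    rw [Finset.sum_congr rfl (fun i _ => step i), ← TensorProduct.sum_tmul]
    congr 1
    have : ∀ i : Fin m, ε (h2 i) • (F.Y a n (h1 i • b) : V)
        = F.Y a n ((ε (h2 i) • h1 i) • b) := by
      intro i
      rw [smul_assoc]
      exact ((F.Y a n).map_smul (ε (h2 i)) (h1 i • b)).symm
    rw [Finset.sum_congr rfl (fun i _ => this i), ← map_sum, ← Finset.sum_smul, hsum]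
  -- Y of a pure tensor applied to vac ⊗ t'
  have L2 : ∀ (a : V) (g : H),
      FS.Y (a ⊗ₜ[k] g) (-1) (F.vac ⊗ₜ[k] t') = ε g • (a ⊗ₜ[k] t') := by
    intro a g
    obtain ⟨mg, g1, g2, hg⟩ := exists_fin_repr (Coalgebra.comul (R := k) g)
    rw [hFS.1 a F.vac g t' (-1) mg g1 g2 hg]
    have step : ∀ i : Fin mg, (F.Y a (-1) (g1 i • F.vac) : V) ⊗ₜ[k] (g2 i * t')
        = (ε (g1 i) * ε (g2 i)) • ((a : V) ⊗ₜ[k] t') := by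
      intro i
      rw [hHF.1 (g1 i), ht' (g2 i), map_smul]
      have hva : (F.Y a (-1) F.vac : V) = a := hF.1.2.2.2.1 a
      rw [hva, TensorProduct.tmul_smul, TensorProduct.smul_tmul', smul_smul, mul_comm]
      rfl
    rw [Finset.sum_congr rfl (fun i _ => step i), ← Finset.sum_smul, repr_counit_mul_sum hg]
  -- Y of an arbitrary element applied to vac ⊗ t'
  have L3 : ∀ v : V ⊗[k] H,
      FS.Y v (-1) (F.vac ⊗ₜ[k] t') = (C v) ⊗ₜ[k] t' := by
    intro v
    induction v using TensorProduct.induction_on with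
    | zero => simp
    | tmul a g => rw [L2 a g, hCtmul, TensorProduct.smul_tmul']
    | add x y hx hy =>
      rw [map_add]
      simp only [Pi.add_apply, LinearMap.add_apply, hx, hy, map_add,
        TensorProduct.add_tmul]
  -- t' • x is always fixed
  have hfix : ∀ x : V, (t' • x) ∈ hFixed k V H := by
    intro x h
    rw [← mul_smul, ht' h, smul_assoc]
  refine ⟨t', ht', hεt', ?_, ?_, ?_⟩
  · -- injectivity
    intro a _ b _ hab
    have := congrArg C hab
    simpa [hCtmul, hεt'] using this
  · -- image
    ext x
    constructor
    · rintro ⟨a, ha, rfl⟩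
      refine ⟨a ⊗ₜ[k] t', ?_⟩
      have hin : FS.Y (a ⊗ₜ[k] t') (-1) (F.vac ⊗ₜ[k] t') = a ⊗ₜ[k] t' := by
        rw [L2 a t', hεt', one_smul]
      rw [hin, L1 F.vac a (-1), ha t', hεt', one_smul]
      have : (F.Y F.vac (-1) a : V) = a := by
        rw [hF.1.2.1 a (-1)]; simp
      rw [this]
    · rintro ⟨v, rfl⟩
      refine ⟨t' • C v, hfix (C v), ?_⟩
      rw [L3 v, L1 F.vac (C v) (-1)]
      have : (F.Y F.vac (-1) (t' • C v) : V) = t' • C v := by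
        rw [hF.1.2.1 (t' • C v) (-1)]; simp
      rw [this]
  · -- products
    intro a _ b hb n
    rw [L1 a b n, hb t', hεt', one_smul]

end HopfVA
end
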